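/- Let A be a ring and I a two-sided ideal of A contained in the Jacobson radical of A. Let P be a bounded complex of finitely generated projective A-modules, and let P/IP denote the complex whose n-th term is P_n / (I·P_n) with the differentials induced by those of P. If the complex P/IP is exact, then P is exact. -/

import Mathlib

open CategoryTheory CategoryTheory.Limits

universe u

/-- The additive functor `Mod A ⥤ Mod A` sending `M` to `M/IM` for a (left) ideal `I`. -/
noncomputable def quotByIdealFunctor (A : Type u) [Ring A] (I : Ideal A) :
    ModuleCat.{u} A ⥤ ModuleCat.{u} A where
  obj M := ModuleCat.of A (M ⧸ (I • ⊤ : Submodule A M))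
  map {M N} f := ModuleCat.ofHom (Submodule.mapQ _ _ f.hom (by
    rw [← Submodule.map_le_iff_le_comap, Submodule.map_smul'']
    exact smul_mono_right I le_top))
  map_id M := by
    apply ModuleCat.hom_ext
    apply Submodule.linearMap_qext
    ext x
    rfl
  map_comp f g := by
    apply ModuleCat.hom_ext
    apply Submodule.linearMap_qext
    ext x
    rfl

noncomputable instance (A : Type u) [Ring A] (I : Ideal A) :
    (quotByIdealFunctor A I).Additive where
  map_add := by
    intros
    apply ModuleCat.hom_ext
    apply Submodule.linearMap_qext
    ext x
    rfl

section NakayamaNC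

variable {A : Type u} [Ring A] {M : Type u} [AddCommGroup M] [Module A M]

lemma exists_left_inv' {I : Ideal A} (hjac : I ≤ (⊥ : Ideal A).jacobson) {x : A} (hx : x ∈ I) :
    ∃ u : A, u * (1 - x) = 1 := by
  obtain ⟨s, hs⟩ := Ideal.exists_mul_add_sub_mem_of_mem_jacobson (-x) (hjac (I.neg_mem hx))
  refine ⟨s, ?_⟩
  rw [neg_add_eq_sub] at hs
  rw [Ideal.mem_bot, sub_eq_zero] at hs
  exact hs

lemma smul_singleton_mem' {I : Ideal A}
    (htwo : ∀ (a : A), ∀ x ∈ I, x * a ∈ I) {m : M} {x : M}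
    (hx : x ∈ I • (Submodule.span A ({m} : Set M))) : ∃ a ∈ I, x = a • m := by
  refine Submodule.smul_induction_on hx ?_ ?_
  · intro r hr n hn
    obtain ⟨c, rfl⟩ := Submodule.mem_span_singleton.mp hn
    exact ⟨r * c, htwo c r hr, (mul_smul r c m).symm⟩
  · rintro x y ⟨a, ha, rfl⟩ ⟨c, hc, rfl⟩
    exact ⟨a + c, I.add_mem ha hc, (add_smul a c m).symm⟩

lemma span_finset_eq_bot' {I : Ideal A}
    (htwo : ∀ (a : A), ∀ x ∈ I, x * a ∈ I) (hjac : I ≤ (⊥ : Ideal A).jacobson) :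
    ∀ (k : ℕ) (s : Finset M), s.card = k →
      Submodule.span A (s : Set M) ≤ I • Submodule.span A (s : Set M) →
      Submodule.span A (s : Set M) = ⊥ := by
  intro k
  induction k with
  | zero =>
    intro s hcard _
    rw [Finset.card_eq_zero.mp hcard]
    simp
  | succ k ih =>
    intro s hcard hle
    obtain ⟨m, hm⟩ : s.Nonempty := Finset.card_pos.mp (by omega)
    classical
    set t := s.erase m with ht
    have hins : insert m t = s := Finset.insert_erase hm
    have hspan : Submodule.span A (s : Set M)
        = Submodule.span A ({m} : Set M) ⊔ Submodule.span A (t : Set M) := by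
      rw [← hins, Finset.coe_insert, Submodule.span_insert]
    have hmem : m ∈ I • Submodule.span A ({m} : Set M) ⊔ I • Submodule.span A (t : Set M) := by
      have h1 : m ∈ Submodule.span A (s : Set M) := Submodule.subset_span hm
      have h2 := hle h1
      rwa [hspan, Submodule.smul_sup] at h2
    obtain ⟨x, hx, y, hy, hxy⟩ := Submodule.mem_sup.mp hmem
    obtain ⟨a, haI, rfl⟩ := smul_singleton_mem' htwo hx
    have hysp : y ∈ Submodule.span A (t : Set M) := Submodule.smul_le_right hy
    have h1 : (1 - a) • m = y := by
      rw [sub_smul, one_smul]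
      exact (eq_sub_of_add_eq' hxy).symm
    obtain ⟨u, hu⟩ := exists_left_inv' hjac haI
    have hmspan : m ∈ Submodule.span A (t : Set M) := by
      have h2 : m = u • ((1 - a) • m) := by rw [← mul_smul, hu, one_smul]
      rw [h2, h1]
      exact Submodule.smul_mem _ u hysp
    have hst : Submodule.span A (s : Set M) = Submodule.span A (t : Set M) := by
      rw [hspan]
      refine le_antisymm (sup_le ?_ le_rfl) le_sup_right
      rw [Submodule.span_le, Set.singleton_subset_iff]
      exact hmspan
    have hcard' : t.card = k := by rw [ht, Finset.card_erase_of_mem hm, hcard]; omega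
    have hle' : Submodule.span A (t : Set M) ≤ I • Submodule.span A (t : Set M) := by
      rw [← hst]; exact hle
    rw [hst]
    exact ih t hcard' hle'

lemma nakayama_bot' {I : Ideal A}
    (htwo : ∀ (a : A), ∀ x ∈ I, x * a ∈ I) (hjac : I ≤ (⊥ : Ideal A).jacobson)
    {N : Submodule A M} (hfg : N.FG) (h : N ≤ I • N) : N = ⊥ := by
  obtain ⟨s, hs⟩ := hfg
  rw [← hs] at h ⊢
  exact span_finset_eq_bot' htwo hjac s.card s rfl h

lemma nakayama_le' {I : Ideal A}
    (htwo : ∀ (a : A), ∀ x ∈ I, x * a ∈ I) (hjac : I ≤ (⊥ : Ideal A).jacobson)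
    {N N' : Submodule A M} (hfg : N.FG) (h : N ≤ N' ⊔ I • N) : N ≤ N' := by
  have hT : (N.map N'.mkQ) ≤ I • (N.map N'.mkQ) := by
    refine le_trans (Submodule.map_mono h) ?_
    rw [Submodule.map_sup, Submodule.map_smul'']
    rw [Submodule.mkQ_map_self, bot_sup_eq]
  have hbot : N.map N'.mkQ = ⊥ := nakayama_bot' htwo hjac (hfg.map _) hT
  intro x hx
  have : N'.mkQ x ∈ N.map N'.mkQ := Submodule.mem_map_of_mem hx
  rw [hbot, Submodule.mem_bot] at this
  rwa [← Submodule.ker_mkQ N', LinearMap.mem_ker]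

end NakayamaNC

section StepLemma

variable {A : Type u} [Ring A]

lemma projective_of_subsingleton' {M : Type u} [AddCommGroup M] [Module A M] [Subsingleton M] :
    Module.Projective A M :=
  Module.Projective.of_split (0 : M →ₗ[A] A) (0 : A →ₗ[A] M)
    (LinearMap.ext fun x => Subsingleton.elim _ _)

lemma step_lemma {I : Ideal A}
    (htwo : ∀ (a : A), ∀ x ∈ I, x * a ∈ I) (hjac : I ≤ (⊥ : Ideal A).jacobson)
    {M₀ M₁ M₂ M₃ : Type u}
    [AddCommGroup M₀] [Module A M₀] [AddCommGroup M₁] [Module A M₁]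
    [AddCommGroup M₂] [Module A M₂] [AddCommGroup M₃] [Module A M₃]
    [Module.Finite A M₁] [Module.Projective A M₁]
    (f : M₀ →ₗ[A] M₁) (g : M₁ →ₗ[A] M₂) (h : M₂ →ₗ[A] M₃)
    (hgf : ∀ x, g (f x) = 0) (hhg : ∀ x, h (g x) = 0)
    (hrange : LinearMap.range g = LinearMap.ker h)
    (hker : Module.Projective A ↥(LinearMap.ker h))
    (hquot : ∀ z : M₁, g z ∈ I • (⊤ : Submodule A M₂) →
      ∃ y, z - f y ∈ I • (⊤ : Submodule A M₁)) :
    LinearMap.range f = LinearMap.ker g ∧ Module.Projective A ↥(LinearMap.ker g) := by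
  set g' : M₁ →ₗ[A] ↥(LinearMap.ker h) :=
    g.codRestrict (LinearMap.ker h) (fun x => LinearMap.mem_ker.mpr (hhg x)) with hg'
  have hsurj : Function.Surjective g' := by
    rintro ⟨z, hz⟩
    rw [← hrange] at hz
    obtain ⟨x, hx⟩ := hz
    exact ⟨x, Subtype.ext hx⟩
  obtain ⟨s, hs⟩ := Module.projective_lifting_property g' LinearMap.id hsurj
  set π : M₁ →ₗ[A] M₁ := LinearMap.id - s.comp g' with hπ
  have hgs : ∀ w : ↥(LinearMap.ker h), g (s w) = (w : M₂) := by
    intro w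
    have h1 : g' (s w) = w := LinearMap.congr_fun hs w
    have h2 : (g' (s w) : M₂) = g (s w) := rfl
    rw [← h2, h1]
  have hπ1 : ∀ x, g (π x) = 0 := by
    intro x
    have : π x = x - s (g' x) := rfl
    rw [this, map_sub, hgs (g' x)]
    have : (g' x : M₂) = g x := rfl
    rw [this, sub_self]
  have hπ2 : ∀ z ∈ LinearMap.ker g, π z = z := by
    intro z hz
    have hz' : g' z = 0 := Subtype.ext (LinearMap.mem_ker.mp hz)
    have : π z = z - s (g' z) := rfl
    rw [this, hz', map_zero, sub_zero]
  have hrangeπ : LinearMap.range π = LinearMap.ker g := by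
    refine le_antisymm ?_ ?_
    · rintro _ ⟨x, rfl⟩
      exact LinearMap.mem_ker.mpr (hπ1 x)
    · intro z hz
      exact ⟨z, hπ2 z hz⟩
  have hfgker : (LinearMap.ker g).FG := by
    rw [← hrangeπ, LinearMap.range_eq_map]
    exact (Module.Finite.fg_top (R := A) (M := M₁)).map π
  have hprojker : Module.Projective A ↥(LinearMap.ker g) := by
    refine Module.Projective.of_split (LinearMap.ker g).subtype
      (π.codRestrict (LinearMap.ker g) (fun c => LinearMap.mem_ker.mpr (hπ1 c))) ?_
    apply LinearMap.ext
    rintro ⟨z, hz⟩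
    exact Subtype.ext (hπ2 z hz)
  refine ⟨le_antisymm ?_ ?_, hprojker⟩
  · rintro _ ⟨x, rfl⟩
    exact LinearMap.mem_ker.mpr (hgf x)
  · have hle : LinearMap.ker g ≤ LinearMap.range f ⊔ I • (LinearMap.ker g) := by
      intro z hz
      obtain ⟨y, hy⟩ := hquot z (by
        rw [LinearMap.mem_ker.mp hz]
        exact Submodule.zero_mem _)
      have hwker : z - f y ∈ LinearMap.ker g := by
        rw [LinearMap.mem_ker, map_sub, LinearMap.mem_ker.mp hz, hgf y, sub_zero]
      have hwI : z - f y ∈ I • (LinearMap.ker g) := by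
        have h1 : π (z - f y) ∈ Submodule.map π (I • (⊤ : Submodule A M₁)) :=
          Submodule.mem_map_of_mem hy
        rw [Submodule.map_smul'', Submodule.map_top, hrangeπ] at h1
        rwa [hπ2 _ hwker] at h1
      exact Submodule.mem_sup.mpr ⟨f y, ⟨y, rfl⟩, z - f y, hwI, by abel⟩
    exact nakayama_le' htwo hjac hfgker hle

end StepLemma

/-- a Nakayama-type lemma for complexes. Let `I` be a two-sided ideal
contained in the Jacobson radical of `A`, and `P` a bounded complex of finitely generated
projective `A`-modules. If the degreewise quotient complex `P/IP` is exact, then `P`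
is exact. -/
theorem exact_of_quotient_exact
    {A : Type u} [Ring A] (I : Ideal A)
    (htwosided : ∀ (a : A), ∀ x ∈ I, x * a ∈ I)
    (hjac : I ≤ (⊥ : Ideal A).jacobson)
    (P : CochainComplex (ModuleCat.{u} A) ℤ)
    (hproj : ∀ n : ℤ, Projective (P.X n))
    (hfg : ∀ n : ℤ, Module.Finite A (P.X n))
    (a b : ℤ)
    (hbdd₁ : ∀ n : ℤ, n < a → IsZero (P.X n))
    (hbdd₂ : ∀ n : ℤ, b < n → IsZero (P.X n))
    (hquot : ∀ n : ℤ,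
      (((quotByIdealFunctor A I).mapHomologicalComplex (ComplexShape.up ℤ)).obj P).ExactAt n) :
    ∀ n : ℤ, P.ExactAt n := by
  have hcomp : ∀ (i j k : ℤ) (x : P.X i), (P.d j k) ((P.d i j) x) = 0 := by
    intro i j k x
    exact LinearMap.congr_fun (ModuleCat.hom_ext_iff.mp (P.d_comp_d i j k)) x
  have hmap : ∀ (M N : ModuleCat.{u} A) (f : M ⟶ N),
      (I • ⊤ : Submodule A M) ≤ Submodule.comap f.hom (I • ⊤ : Submodule A N) := by
    intro M N f
    rw [← Submodule.map_le_iff_le_comap, Submodule.map_smul'']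
    exact smul_mono_right I le_top
  have hquot' : ∀ n : ℤ, ∀ z : P.X n,
      (P.d n (n + 1)) z ∈ I • (⊤ : Submodule A (P.X (n + 1))) →
      ∃ y : P.X (n - 1), z - (P.d (n - 1) n) y ∈ I • (⊤ : Submodule A (P.X n)) := by
    intro n z hz
    have h := hquot n
    rw [HomologicalComplex.exactAt_iff' _ (n - 1) n (n + 1)
      (CochainComplex.prev ℤ n) (CochainComplex.next ℤ n),
      ShortComplex.moduleCat_exact_iff] at h
    obtain ⟨x₁, hx₁⟩ := h (Submodule.Quotient.mk z) (by
      show Submodule.mapQ _ _ (P.d n (n + 1)).hom (hmap _ _ _) (Submodule.Quotient.mk z) = 0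
      rw [Submodule.mapQ_apply, Submodule.Quotient.mk_eq_zero]
      exact hz)
    obtain ⟨y, hy⟩ : ∃ y : P.X (n - 1), Submodule.Quotient.mk y = x₁ :=
      Submodule.Quotient.mk_surjective _ x₁
    refine ⟨y, ?_⟩
    rw [← hy] at hx₁
    have h3 : Submodule.Quotient.mk (p := I • (⊤ : Submodule A (P.X n)))
        ((P.d (n - 1) n) y) = Submodule.Quotient.mk z := by
      rw [← hx₁]
      exact (Submodule.mapQ_apply (h := hmap _ _ (P.d (n - 1) n)) _ _ _ y).symm
    exact (Submodule.Quotient.eq (I • (⊤ : Submodule A (P.X n)))).mp h3.symm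
  have hrangecongr : ∀ (i i' j : ℤ), i = i' →
      LinearMap.range (P.d i j).hom = LinearMap.range (P.d i' j).hom := by
    rintro i i' j rfl; rfl
  have key : ∀ (k : ℕ) (n : ℤ), b + 1 ≤ n + k →
      LinearMap.range (P.d (n - 1) n).hom = LinearMap.ker (P.d n (n + 1)).hom ∧
      Module.Projective A ↥(LinearMap.ker (P.d n (n + 1)).hom) := by
    intro k
    induction k with
    | zero =>
      intro n hn
      have hb : b < n := by simpa using hn
      have hsubgen : ∀ m : ℤ, b < m → Subsingleton (P.X m) := by
        intro m hm
        have hz := hbdd₂ m hm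
        have h1 : (𝟙 (P.X m) : P.X m ⟶ P.X m) = 0 := hz.eq_of_src _ _
        refine ⟨fun x y => ?_⟩
        have hx := LinearMap.congr_fun (ModuleCat.hom_ext_iff.mp h1) x
        have hy := LinearMap.congr_fun (ModuleCat.hom_ext_iff.mp h1) y
        simp only [ModuleCat.hom_zero, LinearMap.zero_apply] at hx hy
        calc x = (𝟙 (P.X m) : P.X m ⟶ P.X m) x := rfl
        _ = 0 := hx
        _ = (𝟙 (P.X m) : P.X m ⟶ P.X m) y := hy.symm
        _ = y := rfl
      haveI hsub : Subsingleton (P.X n) := hsubgen n hb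
      haveI hsub' : Subsingleton (P.X (n + 1)) := hsubgen (n + 1) (by omega)
      constructor
      · have h1 : LinearMap.ker (P.d n (n + 1)).hom = ⊤ := by
          rw [eq_top_iff]
          intro x _
          exact LinearMap.mem_ker.mpr (Subsingleton.elim _ _)
        have h2 : LinearMap.range (P.d (n - 1) n).hom = ⊤ := by
          rw [eq_top_iff]
          intro x _
          exact ⟨0, Subsingleton.elim _ _⟩
        rw [h1, h2]
      · exact projective_of_subsingleton'
    | succ k ih =>
      intro n hn
      by_cases hcase : b + 1 ≤ n + k
      · exact ih n hcase
      · have hnext := ih (n + 1) (by push_cast at hn ⊢; omega)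
        have hr : LinearMap.range (P.d n (n + 1)).hom = LinearMap.ker (P.d (n + 1) (n + 1 + 1)).hom :=
          (hrangecongr (n + 1 - 1) n (n + 1) (by ring)).symm.trans hnext.1
        haveI := hfg n
        haveI : Module.Projective A (P.X n) := (IsProjective.iff_projective (R := A) (P.X n)).mpr (hproj n)
        exact step_lemma htwosided hjac (P.d (n - 1) n).hom (P.d n (n + 1)).hom (P.d (n + 1) (n + 1 + 1)).hom
          (hcomp _ _ _) (hcomp _ _ _) hr hnext.2 (hquot' n)
  intro n
  rw [HomologicalComplex.exactAt_iff' P (n - 1) n (n + 1)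
    (CochainComplex.prev ℤ n) (CochainComplex.next ℤ n),
    ShortComplex.moduleCat_exact_iff_range_eq_ker]
  exact (key (b + 1 - n).toNat n (by omega)).1
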